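/- Let p be an odd prime. Then, in the ring ℤ_p of p-adic integers, ∑_{k=0}^{p-1} C(2k,k)^2 · 16^{-k} ≡ (-1)^{(p-1)/2} (mod p^2), i.e. the truncated hypergeometric sum is congruent to the Legendre symbol (-1/p) modulo p^2. -/

import Mathlib

open Finset Polynomial

namespace RVaux

variable {p : ℕ} [hp : Fact p.Prime]

theorem norm_nat_le_one (n : ℕ) : ‖(n : ℚ_[p])‖ ≤ 1 := by
  simpa using Padic.norm_int_le_one (p := p) (n : ℤ)

theorem norm_nat_eq_one {n : ℕ} (h : ¬ (p ∣ n)) : ‖(n : ℚ_[p])‖ = 1 := by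
  refine le_antisymm (norm_nat_le_one n) ?_
  by_contra hlt
  push_neg at hlt
  have h2 : ‖((n : ℤ) : ℚ_[p])‖ < 1 := by simpa using hlt
  rw [Padic.norm_intCast_lt_one_iff] at h2
  exact h (by exact_mod_cast h2)

theorem norm_sum_le_of {ι : Type*} (s : Finset ι) (f : ι → ℚ_[p]) {ε : ℝ} (hε : 0 ≤ ε)
    (h : ∀ i ∈ s, ‖f i‖ ≤ ε) : ‖∑ i ∈ s, f i‖ ≤ ε := by
  induction s using Finset.cons_induction with
  | empty => simpa using hε
  | cons a t ha ih =>
    rw [Finset.sum_cons]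
    exact le_trans (Padic.nonarchimedean _ _)
      (max_le (h a (Finset.mem_cons_self _ _)) (ih fun i hi => h i (Finset.mem_cons.2 (Or.inr hi))))

theorem norm_prod_le_one {ι : Type*} (s : Finset ι) (f : ι → ℚ_[p])
    (h : ∀ i ∈ s, ‖f i‖ ≤ 1) : ‖∏ i ∈ s, f i‖ ≤ 1 := by
  induction s using Finset.cons_induction with
  | empty => simp
  | cons a t ha ih =>
    rw [Finset.prod_cons, norm_mul]
    exact mul_le_one₀ (h a (Finset.mem_cons_self _ _)) (norm_nonneg _)
      (ih fun i hi => h i (Finset.mem_cons.2 (Or.inr hi)))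

theorem norm_sub_le_max (a b : ℚ_[p]) : ‖a - b‖ ≤ max ‖a‖ ‖b‖ := by
  have : a - b = a + (-b) := by ring
  rw [this]
  simpa using Padic.nonarchimedean a (-b)

theorem approx_trans {a b c : ℚ_[p]} {ε : ℝ} (h1 : ‖a - b‖ ≤ ε) (h2 : ‖b - c‖ ≤ ε) :
    ‖a - c‖ ≤ ε := by
  have : a - c = (a - b) + (b - c) := by ring
  rw [this]
  exact le_trans (Padic.nonarchimedean _ _) (max_le h1 h2)

theorem prod_approx {ι : Type*} (s : Finset ι) (w : ι → ℚ_[p]) (h : ∀ i ∈ s, ‖w i‖ ≤ 1) :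
    ‖(∏ i ∈ s, (1 - (p : ℚ_[p]) * w i)) - (1 - (p : ℚ_[p]) * ∑ i ∈ s, w i)‖ ≤ ((p : ℝ)⁻¹)^2 := by
  have hppos : (0:ℝ) < (p:ℝ) := by exact_mod_cast hp.out.pos
  have hp1 : (p : ℝ)⁻¹ ≤ 1 := inv_le_one_of_one_le₀ (by exact_mod_cast hp.out.one_lt.le)
  have hp0 : (0:ℝ) ≤ (p:ℝ)⁻¹ := inv_nonneg.2 hppos.le
  induction s using Finset.cons_induction with
  | empty => simp only [Finset.prod_empty, Finset.sum_empty, mul_zero, sub_zero, sub_self,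
      norm_zero]; positivity
  | cons a t ha ih =>
    rw [Finset.prod_cons, Finset.sum_cons]
    have hwa := h a (Finset.mem_cons_self _ _)
    have ht : ∀ i ∈ t, ‖w i‖ ≤ 1 := fun i hi => h i (Finset.mem_cons.2 (Or.inr hi))
    have key : (1 - (p : ℚ_[p]) * w a) * (∏ i ∈ t, (1 - (p : ℚ_[p]) * w i))
        - (1 - (p : ℚ_[p]) * (w a + ∑ i ∈ t, w i))
        = (1 - (p : ℚ_[p]) * w a) *
            ((∏ i ∈ t, (1 - (p : ℚ_[p]) * w i)) - (1 - (p : ℚ_[p]) * ∑ i ∈ t, w i))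
          + (p : ℚ_[p])^2 * (w a * ∑ i ∈ t, w i) := by ring
    rw [key]
    have h1 : ‖1 - (p : ℚ_[p]) * w a‖ ≤ 1 := by
      refine le_trans (norm_sub_le_max _ _) (max_le (by simp) ?_)
      rw [norm_mul, Padic.norm_p]
      nlinarith [norm_nonneg (w a)]
    refine le_trans (Padic.nonarchimedean _ _) (max_le ?_ ?_)
    · rw [norm_mul]
      have := ih ht
      nlinarith [norm_nonneg ((∏ i ∈ t, (1 - (p : ℚ_[p]) * w i)) -
        (1 - (p : ℚ_[p]) * ∑ i ∈ t, w i))]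
    · rw [norm_mul, norm_mul, norm_pow, Padic.norm_p]
      have hs : ‖∑ i ∈ t, w i‖ ≤ 1 := norm_sum_le_of t w zero_le_one ht
      have hm : ‖w a‖ * ‖∑ i ∈ t, w i‖ ≤ 1 := mul_le_one₀ hwa (norm_nonneg _) hs
      have hm0 : 0 ≤ ‖w a‖ * ‖∑ i ∈ t, w i‖ := mul_nonneg (norm_nonneg _) (norm_nonneg _)
      nlinarith [sq_nonneg ((p:ℝ)⁻¹)]

theorem prod_approx_one {ι : Type*} (s : Finset ι) (w : ι → ℚ_[p]) (h : ∀ i ∈ s, ‖w i‖ ≤ 1) :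
    ‖(∏ i ∈ s, (1 - (p : ℚ_[p]) * w i)) - 1‖ ≤ (p : ℝ)⁻¹ := by
  have h1 : ‖(p : ℚ_[p]) * ∑ i ∈ s, w i‖ ≤ (p:ℝ)⁻¹ := by
    rw [norm_mul, Padic.norm_p]
    calc (p:ℝ)⁻¹ * ‖∑ i ∈ s, w i‖ ≤ (p:ℝ)⁻¹ * 1 :=
          mul_le_mul_of_nonneg_left (norm_sum_le_of s w zero_le_one h) (by positivity)
      _ = (p:ℝ)⁻¹ := mul_one _
  have h2 := prod_approx s w h
  have hple : ((p:ℝ)⁻¹)^2 ≤ (p:ℝ)⁻¹ := by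
    rw [pow_two]
    have hp1 : (p:ℝ)⁻¹ ≤ 1 := inv_le_one_of_one_le₀ (by exact_mod_cast hp.out.one_lt.le)
    nlinarith [inv_nonneg.2 (le_of_lt (by exact_mod_cast hp.out.pos : (0:ℝ) < p))]
  refine approx_trans (le_trans h2 hple) ?_
  simpa using h1


theorem nat_odds (k : ℕ) :
    (∏ j ∈ Finset.range k, (2*j+1)) * (2^k * Nat.factorial k) = Nat.factorial (2*k) := by
  induction k with
  | zero => simp
  | succ k ih =>
    have h2 : 2*(k+1) = 2*k+1+1 := by ring
    rw [Finset.prod_range_succ, h2, Nat.factorial_succ (2*k+1), Nat.factorial_succ (2*k),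
      Nat.factorial_succ k, ← ih]
    ring

theorem nat_vdm (n x : ℕ) :
    ∑ k ∈ Finset.range (n+1), n.choose k * (x+n).choose k = (x+2*n).choose n := by
  have h := Nat.add_choose_eq n (x+n) n
  rw [Finset.Nat.sum_antidiagonal_eq_sum_range_succ
    (f := fun i j => n.choose i * (x+n).choose j)] at h
  have h2 : x + 2*n = n + (x+n) := by ring
  rw [h2, h, ← Finset.sum_range_reflect]
  refine Finset.sum_congr rfl fun k hk => ?_
  rw [Finset.mem_range] at hk
  have hk' : k ≤ n := by omega
  have h3 : n + 1 - 1 - k = n - k := by omega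
  rw [h3, Nat.choose_symm hk']

theorem nat_sum_sq (n : ℕ) :
    ∑ k ∈ Finset.range (n+1), n.choose k * n.choose k = (2*n).choose n := by
  have := nat_vdm n 0
  simpa using this


theorem cast_fact_ne_zero (n : ℕ) : ((Nat.factorial n : ℕ) : ℚ_[p]) ≠ 0 :=
  Nat.cast_ne_zero.2 (Nat.factorial_ne_zero n)

theorem term_eq {m k : ℕ} (hk : k ≤ m) (hpm : p = 2*m+1) :
    (((2*k).choose k : ℕ) : ℚ_[p])^2 * ((16 : ℚ_[p])^k)⁻¹
      = ((m.choose k : ℕ) : ℚ_[p])^2 *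
        ∏ j ∈ Finset.range k, (1 - (p : ℚ_[p]) * ((2*(m-j) : ℕ) : ℚ_[p])⁻¹)^2 := by
  classical
  have hfacne := fun n => cast_fact_ne_zero (p := p) n
  set O : ℚ_[p] := ∏ j ∈ Finset.range k, ((2*j+1 : ℕ) : ℚ_[p]) with hO
  set D : ℚ_[p] := ∏ j ∈ Finset.range k, ((m-j : ℕ) : ℚ_[p]) with hD
  have hDne : D ≠ 0 := by
    rw [hD]
    refine Finset.prod_ne_zero_iff.2 fun j hj => ?_
    rw [Finset.mem_range] at hj
    exact Nat.cast_ne_zero.2 (by omega)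
  have hOfact : O * ((2:ℚ_[p])^k * (Nat.factorial k : ℚ_[p])) = (Nat.factorial (2*k) : ℚ_[p]) := by
    have h := nat_odds k
    have := congrArg (Nat.cast : ℕ → ℚ_[p]) h
    push_cast at this
    have hcast : (∏ j ∈ Finset.range k, ((2*j+1 : ℕ) : ℚ_[p]))
        = ∏ j ∈ Finset.range k, (2*(j:ℚ_[p])+1) :=
      Finset.prod_congr rfl fun j _ => by push_cast; ring
    rw [hO, hcast]
    exact this
  have hDfact : D * ((Nat.factorial (m-k) : ℕ) : ℚ_[p]) = ((Nat.factorial m : ℕ) : ℚ_[p]) := by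
    have h := Nat.factorial_mul_descFactorial hk
    rw [Nat.descFactorial_eq_prod_range] at h
    have := congrArg (Nat.cast : ℕ → ℚ_[p]) h
    push_cast at this
    rw [hD, mul_comm]
    exact_mod_cast this
  have hC2k : (((2*k).choose k : ℕ) : ℚ_[p]) = O * (2:ℚ_[p])^k / (Nat.factorial k : ℚ_[p]) := by
    have h := Nat.choose_mul_factorial_mul_factorial (show k ≤ 2*k by omega)
    have h2 : 2*k - k = k := by omega
    rw [h2] at h
    have hc := congrArg (Nat.cast : ℕ → ℚ_[p]) h
    push_cast at hc
    rw [eq_div_iff (hfacne k)]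
    refine mul_right_cancel₀ (hfacne k) ?_
    rw [mul_assoc O, hOfact]
    exact hc
  have hCm : ((m.choose k : ℕ) : ℚ_[p]) = D / (Nat.factorial k : ℚ_[p]) := by
    have h := Nat.choose_mul_factorial_mul_factorial hk
    have hc := congrArg (Nat.cast : ℕ → ℚ_[p]) h
    push_cast at hc
    rw [eq_div_iff (hfacne k)]
    refine mul_right_cancel₀ (hfacne (m-k)) ?_
    rw [hDfact]
    exact hc
  have hfactor : ∀ j ∈ Finset.range k,
      (1 - (p : ℚ_[p]) * ((2*(m-j) : ℕ) : ℚ_[p])⁻¹)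
        = (-1) * ((2*j+1 : ℕ) : ℚ_[p]) * (((2*(m-j) : ℕ) : ℚ_[p]))⁻¹ := by
    intro j hj
    rw [Finset.mem_range] at hj
    have hXne : ((2*(m-j) : ℕ) : ℚ_[p]) ≠ 0 := Nat.cast_ne_zero.2 (by omega)
    have hp' : (p : ℚ_[p]) = 2*(m:ℚ_[p])+1 := by exact_mod_cast congrArg (Nat.cast : ℕ → ℚ_[p]) hpm
    have hXval : ((2*(m-j) : ℕ) : ℚ_[p]) = 2*((m:ℚ_[p]) - (j:ℚ_[p])) := by
      push_cast [Nat.cast_sub (show j ≤ m by omega)]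
      ring
    have h1 : (1 - (p : ℚ_[p]) * ((2*(m-j) : ℕ) : ℚ_[p])⁻¹)
        = (((2*(m-j) : ℕ) : ℚ_[p]) - (p : ℚ_[p])) * ((2*(m-j) : ℕ) : ℚ_[p])⁻¹ := by
      rw [sub_mul, mul_inv_cancel₀ hXne]
    rw [h1]
    congr 1
    rw [hXval, hp']
    push_cast
    ring
  have hprod : ∏ j ∈ Finset.range k, (1 - (p : ℚ_[p]) * ((2*(m-j) : ℕ) : ℚ_[p])⁻¹)
      = (-1)^k * O * ((2:ℚ_[p])^k * D)⁻¹ := by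
    have hB : (∏ x ∈ Finset.range k, ((2*(m-x) : ℕ) : ℚ_[p])) = (2:ℚ_[p])^k * D := by
      calc (∏ x ∈ Finset.range k, ((2*(m-x) : ℕ) : ℚ_[p]))
          = ∏ x ∈ Finset.range k, ((2:ℚ_[p]) * ((m-x : ℕ) : ℚ_[p])) :=
            Finset.prod_congr rfl fun x _ => by push_cast; ring
        _ = (∏ _x ∈ Finset.range k, (2:ℚ_[p])) * ∏ x ∈ Finset.range k, ((m-x : ℕ) : ℚ_[p]) :=
            Finset.prod_mul_distrib
        _ = (2:ℚ_[p])^k * D := by rw [Finset.prod_const, Finset.card_range, hD]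
    rw [Finset.prod_congr rfl hfactor, Finset.prod_mul_distrib, Finset.prod_mul_distrib,
      Finset.prod_const, Finset.card_range, Finset.prod_inv_distrib, hB, ← hO]
  have h16 : (16 : ℚ_[p])^k = ((2:ℚ_[p])^k)^4 := by
    rw [show (16 : ℚ_[p]) = 2^4 by norm_num, ← pow_mul, ← pow_mul, Nat.mul_comm]
  have h2ne : (2:ℚ_[p])^k ≠ 0 := pow_ne_zero _ two_ne_zero
  have hsq : ((-1:ℚ_[p])^k * O * (((2:ℚ_[p])^k * D)⁻¹))^2
      = O^2 * ((((2:ℚ_[p])^k)^2 * D^2)⁻¹) := by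
    rw [mul_pow, mul_pow, ← pow_mul, mul_comm k 2, pow_mul, neg_one_sq, one_pow, one_mul,
      mul_inv, mul_pow, inv_pow, inv_pow, ← mul_inv]
  rw [Finset.prod_pow, hprod, hC2k, hCm, h16, hsq]
  clear_value O D
  have h3 : (((2:ℚ_[p])^k)^4)⁻¹ = (((2:ℚ_[p])^k)^2)⁻¹ * (((2:ℚ_[p])^k)^2)⁻¹ := by
    rw [← mul_inv, ← pow_add]
  have h4 : ((((2:ℚ_[p])^k)^2) * D^2)⁻¹ = (((2:ℚ_[p])^k)^2)⁻¹ * (D^2)⁻¹ := mul_inv _ _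
  have h1 : ((2:ℚ_[p])^k)^2 * (((2:ℚ_[p])^k)^2)⁻¹ = 1 := mul_inv_cancel₀ (pow_ne_zero _ h2ne)
  have h2 : D^2 * (D^2)⁻¹ = 1 := mul_inv_cancel₀ (pow_ne_zero _ hDne)
  rw [h3, h4]
  linear_combination (O^2 * (((Nat.factorial k : ℚ_[p]))⁻¹)^2 * (((2:ℚ_[p])^k)^2)⁻¹) * h1
    - (O^2 * (((Nat.factorial k : ℚ_[p]))⁻¹)^2 * (((2:ℚ_[p])^k)^2)⁻¹) * h2

theorem desc2n (n x : ℕ) : (x+2*n).descFactorial n = ∏ j ∈ Finset.range n, (x+n+1+j) := by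
  rw [Nat.descFactorial_eq_prod_range, ← Finset.prod_range_reflect]
  exact Finset.prod_congr rfl fun j hj => by rw [Finset.mem_range] at hj; omega

theorem coeff_zero_prod {ι : Type*} (s : Finset ι) (c : ι → ℚ_[p]) :
    (∏ i ∈ s, (X + C (c i))).coeff 0 = ∏ i ∈ s, c i := by
  rw [Polynomial.coeff_zero_eq_eval_zero, Polynomial.eval_prod]
  simp

theorem coeff_one_prod {ι : Type*} [DecidableEq ι] (s : Finset ι) (c : ι → ℚ_[p]) :
    (∏ i ∈ s, (X + C (c i))).coeff 1 = ∑ j ∈ s, ∏ i ∈ s.erase j, c i := by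
  induction s using Finset.induction_on with
  | empty => simp [Polynomial.coeff_one]
  | @insert a t ha ih =>
    rw [Finset.prod_insert ha]
    have hc1 : ((X + C (c a)) * ∏ i ∈ t, (X + C (c i))).coeff 1
        = (∏ i ∈ t, (X + C (c i))).coeff 0 + c a * (∏ i ∈ t, (X + C (c i))).coeff 1 := by
      rw [add_mul, Polynomial.coeff_add, Polynomial.coeff_C_mul]
      congr 1
      exact Polynomial.coeff_X_mul _ 0
    rw [hc1, ih, coeff_zero_prod, Finset.sum_insert ha, Finset.erase_insert ha, Finset.mul_sum]
    congr 1
    refine Finset.sum_congr rfl fun j hj => ?_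
    have hne : a ≠ j := fun h => ha (h ▸ hj)
    rw [Finset.erase_insert_of_ne hne, Finset.prod_insert (fun h => ha (Finset.mem_of_mem_erase h))]

theorem sum_erase_eq {ι : Type*} [DecidableEq ι] (s : Finset ι) (c : ι → ℚ_[p])
    (hc : ∀ i ∈ s, c i ≠ 0) :
    ∑ j ∈ s, ∏ i ∈ s.erase j, c i = (∏ i ∈ s, c i) * ∑ j ∈ s, (c j)⁻¹ := by
  rw [Finset.mul_sum]
  refine Finset.sum_congr rfl fun j hj => ?_
  rw [← Finset.prod_erase_mul s c hj, mul_assoc, mul_inv_cancel₀ (hc j hj), mul_one]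

theorem q_eval (n k x : ℕ) (hk : k ≤ n) :
    Polynomial.eval ((x:ℚ_[p])) (∏ j ∈ Finset.range k, (X + C ((n-j : ℕ) : ℚ_[p])))
      = (((x+n).descFactorial k : ℕ) : ℚ_[p]) := by
  rw [Polynomial.eval_prod, Nat.descFactorial_eq_prod_range, Nat.cast_prod]
  refine Finset.prod_congr rfl fun j hj => ?_
  rw [Finset.mem_range] at hj
  simp only [Polynomial.eval_add, Polynomial.eval_X, Polynomial.eval_C]
  have h1 : x + n - j = x + (n - j) := by omega
  rw [h1]
  exact (Nat.cast_add _ _).symm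

theorem r_eval (n x : ℕ) :
    Polynomial.eval ((x:ℚ_[p])) (∏ j ∈ Finset.range n, (X + C ((n+1+j : ℕ) : ℚ_[p])))
      = (((x+2*n).descFactorial n : ℕ) : ℚ_[p]) := by
  rw [Polynomial.eval_prod, desc2n, Nat.cast_prod]
  refine Finset.prod_congr rfl fun j hj => ?_
  simp only [Polynomial.eval_add, Polynomial.eval_X, Polynomial.eval_C]
  have h1 : x + n + 1 + j = x + (n+1+j) := by omega
  rw [h1]
  push_cast
  ring

theorem poly_eq (n : ℕ) :
    (∑ k ∈ Finset.range (n+1), C (((n.choose k : ℕ) : ℚ_[p]) / (Nat.factorial k : ℚ_[p])) *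
        ∏ j ∈ Finset.range k, (X + C ((n-j : ℕ) : ℚ_[p])))
      = C (((Nat.factorial n : ℚ_[p]))⁻¹) * ∏ j ∈ Finset.range n, (X + C ((n+1+j : ℕ) : ℚ_[p])) := by
  apply Polynomial.eq_of_infinite_eval_eq
  apply Set.infinite_of_injective_forall_mem (f := (Nat.cast : ℕ → ℚ_[p])) Nat.cast_injective
  intro x
  simp only [Set.mem_setOf_eq]
  rw [Polynomial.eval_finset_sum, Polynomial.eval_mul, Polynomial.eval_C, r_eval]
  have hL : ∀ k ∈ Finset.range (n+1),
      Polynomial.eval ((x:ℚ_[p])) (C (((n.choose k : ℕ) : ℚ_[p]) / (Nat.factorial k : ℚ_[p])) *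
        ∏ j ∈ Finset.range k, (X + C ((n-j : ℕ) : ℚ_[p])))
      = ((n.choose k : ℕ) : ℚ_[p]) * (((x+n).choose k : ℕ) : ℚ_[p]) := by
    intro k hk
    rw [Finset.mem_range] at hk
    rw [Polynomial.eval_mul, Polynomial.eval_C, q_eval n k x (by omega),
      Nat.descFactorial_eq_factorial_mul_choose, Nat.cast_mul]
    have hkf := cast_fact_ne_zero (p := p) k
    field_simp
  rw [Finset.sum_congr rfl hL, Nat.descFactorial_eq_factorial_mul_choose, Nat.cast_mul,
    ← mul_assoc, inv_mul_cancel₀ (by exact_mod_cast cast_fact_ne_zero (p := p) n), one_mul]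
  exact_mod_cast nat_vdm n x


theorem F1 (n : ℕ) :
    ∑ k ∈ Finset.range (n+1), ((n.choose k : ℕ) : ℚ_[p])^2 *
        (∑ j ∈ Finset.range k, (((n-j : ℕ) : ℚ_[p]))⁻¹)
      = (((2*n).choose n : ℕ) : ℚ_[p]) * ∑ j ∈ Finset.range n, (((n+1+j : ℕ) : ℚ_[p]))⁻¹ := by
  classical
  have h := congrArg (fun P : Polynomial ℚ_[p] => P.coeff 1) (poly_eq (p := p) n)
  simp only [Polynomial.finset_sum_coeff, Polynomial.coeff_C_mul, coeff_one_prod] at h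
  have hL : ∀ k ∈ Finset.range (n+1),
      (((n.choose k : ℕ) : ℚ_[p]) / (Nat.factorial k : ℚ_[p])) *
        (∑ j ∈ Finset.range k, ∏ i ∈ (Finset.range k).erase j, ((n-i : ℕ) : ℚ_[p]))
      = ((n.choose k : ℕ) : ℚ_[p])^2 * (∑ j ∈ Finset.range k, (((n-j : ℕ) : ℚ_[p]))⁻¹) := by
    intro k hk
    rw [Finset.mem_range] at hk
    rw [sum_erase_eq _ _ (fun j hj => by
      rw [Finset.mem_range] at hj
      exact Nat.cast_ne_zero.2 (by omega))]
    have hdc : (∏ j ∈ Finset.range k, ((n-j : ℕ) : ℚ_[p]))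
        = (Nat.factorial k : ℚ_[p]) * ((n.choose k : ℕ) : ℚ_[p]) := by
      rw [← Nat.cast_prod, ← Nat.descFactorial_eq_prod_range,
        Nat.descFactorial_eq_factorial_mul_choose, Nat.cast_mul]
    rw [hdc]
    have hkf := cast_fact_ne_zero (p := p) k
    field_simp
  rw [Finset.sum_congr rfl hL] at h
  rw [h]
  have hdc2 : (∏ j ∈ Finset.range n, ((n+1+j : ℕ) : ℚ_[p]))
      = (Nat.factorial n : ℚ_[p]) * (((2*n).choose n : ℕ) : ℚ_[p]) := by
    have h0 : (0+2*n).descFactorial n = ∏ j ∈ Finset.range n, (0+n+1+j) := desc2n n 0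
    simp only [Nat.zero_add] at h0
    rw [← Nat.cast_prod, ← h0, Nat.descFactorial_eq_factorial_mul_choose, Nat.cast_mul]
  rw [sum_erase_eq _ _ (fun j hj => Nat.cast_ne_zero.2 (by omega)), hdc2]
  have hnf := cast_fact_ne_zero (p := p) n
  field_simp


theorem central_eq {m : ℕ} (hpm : p = 2*m+1) :
    (((2*m).choose m : ℕ) : ℚ_[p])
      = (-1 : ℚ_[p])^m * ∏ j ∈ Finset.range m, (1 - (p:ℚ_[p]) * (((j+1 : ℕ) : ℚ_[p]))⁻¹) := by
  have hfactor : ∀ j ∈ Finset.range m,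
      (1 - (p:ℚ_[p]) * (((j+1 : ℕ) : ℚ_[p]))⁻¹)
        = (-1) * ((2*m-j : ℕ) : ℚ_[p]) * (((j+1 : ℕ) : ℚ_[p]))⁻¹ := by
    intro j hj
    rw [Finset.mem_range] at hj
    have hne : ((j+1 : ℕ) : ℚ_[p]) ≠ 0 := Nat.cast_ne_zero.2 (by omega)
    have h1 : (1 - (p:ℚ_[p]) * ((j+1:ℕ):ℚ_[p])⁻¹)
        = (((j+1:ℕ):ℚ_[p]) - (p:ℚ_[p])) * ((j+1:ℕ):ℚ_[p])⁻¹ := by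
      rw [sub_mul, mul_inv_cancel₀ hne]
    rw [h1]
    congr 1
    have hp' : (p : ℚ_[p]) = 2*(m:ℚ_[p])+1 := by
      exact_mod_cast congrArg (Nat.cast : ℕ → ℚ_[p]) hpm
    push_cast [Nat.cast_sub (show j ≤ 2*m by omega)]
    rw [hp']
    ring
  rw [Finset.prod_congr rfl hfactor, Finset.prod_mul_distrib, Finset.prod_mul_distrib,
    Finset.prod_const, Finset.card_range, Finset.prod_inv_distrib]
  have hA : (∏ j ∈ Finset.range m, ((2*m-j : ℕ) : ℚ_[p]))
      = (Nat.factorial m : ℚ_[p]) * (((2*m).choose m : ℕ) : ℚ_[p]) := by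
    rw [← Nat.cast_prod, ← Nat.descFactorial_eq_prod_range,
      Nat.descFactorial_eq_factorial_mul_choose, Nat.cast_mul]
  have hB : (∏ j ∈ Finset.range m, ((j+1 : ℕ) : ℚ_[p])) = (Nat.factorial m : ℚ_[p]) := by
    rw [← Nat.cast_prod]
    exact_mod_cast congrArg (Nat.cast : ℕ → ℚ_[p]) (Finset.prod_range_add_one_eq_factorial m)
  rw [hA, hB]
  have hmf := cast_fact_ne_zero (p := p) m
  have h1 : ((-1:ℚ_[p])^m) * ((-1:ℚ_[p])^m) = 1 := by
    rw [← pow_add, ← two_mul, pow_mul, neg_one_sq, one_pow]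
  have h2 : (Nat.factorial m : ℚ_[p]) * ((Nat.factorial m : ℚ_[p]))⁻¹ = 1 := mul_inv_cancel₀ hmf
  linear_combination (-( (((2*m).choose m : ℕ) : ℚ_[p]) * (Nat.factorial m : ℚ_[p])
    * ((Nat.factorial m : ℚ_[p]))⁻¹)) * h1 - (((2*m).choose m : ℕ) : ℚ_[p]) * h2

theorem harmonic_zero {m : ℕ} (hpm : p = 2*m+1) :
    ‖(∑ j ∈ Finset.range m, (((m+1+j : ℕ) : ℚ_[p]))⁻¹)
      + ∑ j ∈ Finset.range m, (((j+1 : ℕ) : ℚ_[p]))⁻¹‖ ≤ (p:ℝ)⁻¹ := by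
  have hm1 : 1 ≤ m ∨ m = 0 := by omega
  have hppos : (0:ℝ) < (p:ℝ) := by exact_mod_cast hp.out.pos
  have hsplit : (∑ j ∈ Finset.range m, (((m+1+j : ℕ) : ℚ_[p]))⁻¹)
      + ∑ j ∈ Finset.range m, (((j+1 : ℕ) : ℚ_[p]))⁻¹
      = ∑ j ∈ Finset.range (2*m), (((j+1 : ℕ) : ℚ_[p]))⁻¹ := by
    rw [add_comm, two_mul, Finset.sum_range_add]
    congr 1
    exact Finset.sum_congr rfl fun j _ => by rw [show m + j + 1 = m+1+j by omega]
  rw [hsplit]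
  set T := ∑ j ∈ Finset.range (2*m), (((j+1 : ℕ) : ℚ_[p]))⁻¹ with hT
  have hrefl : T = ∑ j ∈ Finset.range (2*m), (((2*m-j : ℕ) : ℚ_[p]))⁻¹ := by
    rw [hT, ← Finset.sum_range_reflect]
    refine Finset.sum_congr rfl fun j hj => ?_
    rw [Finset.mem_range] at hj
    congr 2
    omega
  have h2T : (2:ℚ_[p]) * T = ∑ j ∈ Finset.range (2*m),
      ((p:ℚ_[p]) * ((((j+1)*(2*m-j) : ℕ) : ℚ_[p]))⁻¹) := by
    calc (2:ℚ_[p]) * T = T + T := two_mul T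
      _ = ∑ j ∈ Finset.range (2*m),
          ((((j+1 : ℕ) : ℚ_[p]))⁻¹ + (((2*m-j : ℕ) : ℚ_[p]))⁻¹) := by
          nth_rewrite 2 [hrefl]
          rw [hT, ← Finset.sum_add_distrib]
      _ = ∑ j ∈ Finset.range (2*m),
          ((p:ℚ_[p]) * ((((j+1)*(2*m-j) : ℕ) : ℚ_[p]))⁻¹) := by
          refine Finset.sum_congr rfl fun j hj => ?_
          rw [Finset.mem_range] at hj
          have ha : ((j+1 : ℕ) : ℚ_[p]) ≠ 0 := Nat.cast_ne_zero.2 (by omega)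
          have hb : ((2*m-j : ℕ) : ℚ_[p]) ≠ 0 := Nat.cast_ne_zero.2 (by omega)
          have hab : ((j+1) : ℕ) + ((2*m-j) : ℕ) = p := by omega
          have habc : ((j+1 : ℕ) : ℚ_[p]) + ((2*m-j : ℕ) : ℚ_[p]) = (p : ℚ_[p]) := by
            rw [← Nat.cast_add]
            exact_mod_cast congrArg (Nat.cast : ℕ → ℚ_[p]) hab
          rw [Nat.cast_mul, mul_inv, ← habc, add_mul, ← mul_assoc, mul_inv_cancel₀ ha, one_mul,
            mul_comm (((j+1:ℕ):ℚ_[p]))⁻¹, ← mul_assoc, mul_inv_cancel₀ hb, one_mul, add_comm]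
  have hbound : ‖(2:ℚ_[p]) * T‖ ≤ (p:ℝ)⁻¹ := by
    rw [h2T]
    refine norm_sum_le_of _ _ (by positivity) fun j hj => ?_
    rw [Finset.mem_range] at hj
    rw [norm_mul, Padic.norm_p]
    have hn1 : ‖((((j+1)*(2*m-j) : ℕ)) : ℚ_[p])⁻¹‖ ≤ 1 := by
      rw [norm_inv, norm_nat_eq_one]
      · simp
      · intro hdvd
        rcases (Nat.Prime.dvd_mul hp.out).1 hdvd with h | h
        · have := Nat.le_of_dvd (by omega) h
          omega
        · have := Nat.le_of_dvd (by omega) h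
          omega
    have hp0 : (0:ℝ) ≤ (p:ℝ)⁻¹ := inv_nonneg.2 hppos.le
    nlinarith [norm_nonneg ((((j+1)*(2*m-j) : ℕ) : ℚ_[p]))⁻¹]
  have h2n : ‖(2:ℚ_[p])‖ = 1 := by
    have h2c : ((2:ℕ) : ℚ_[p]) = (2:ℚ_[p]) := by push_cast; rfl
    rw [← h2c]
    refine norm_nat_eq_one fun hdvd => ?_
    have := Nat.le_of_dvd (by omega) hdvd
    have := hp.out.two_le
    omega
  calc ‖T‖ = ‖(2:ℚ_[p])‖ * ‖T‖ := by rw [h2n, one_mul]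
    _ = ‖(2:ℚ_[p]) * T‖ := (norm_mul _ _).symm
    _ ≤ (p:ℝ)⁻¹ := hbound


theorem main {m : ℕ} (hpm : p = 2*m+1) :
    ‖(∑ k ∈ Finset.range p, (((2*k).choose k : ℕ) : ℚ_[p])^2 * ((16:ℚ_[p])^k)⁻¹)
      - (-1:ℚ_[p])^m‖ ≤ ((p:ℝ)⁻¹)^2 := by
  have hppos : (0:ℝ) < (p:ℝ) := by exact_mod_cast hp.out.pos
  have hp0 : (0:ℝ) ≤ (p:ℝ)⁻¹ := inv_nonneg.2 hppos.le
  have hpinv1 : (p:ℝ)⁻¹ ≤ 1 := inv_le_one_of_one_le₀ (by exact_mod_cast hp.out.one_lt.le)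
  have hm1 : 1 ≤ m := by have := hp.out.two_le; omega
  have hsq0 : (0:ℝ) ≤ ((p:ℝ)⁻¹)^2 := by positivity
  have hsqle : ((p:ℝ)⁻¹)^2 ≤ (p:ℝ)⁻¹ := by nlinarith
  have h16n : ‖(16:ℚ_[p])‖ = 1 := by
    have hc : ((16:ℕ) : ℚ_[p]) = (16:ℚ_[p]) := by push_cast; rfl
    rw [← hc]
    refine norm_nat_eq_one fun hdvd => ?_
    have h2 : p ∣ 2 := hp.out.dvd_of_dvd_pow (n := 4) (by norm_num at hdvd ⊢; exact_mod_cast hdvd)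
    have := Nat.le_of_dvd (by omega) h2
    omega
  have h16kn : ∀ k : ℕ, ‖((16:ℚ_[p])^k)⁻¹‖ = 1 := by
    intro k
    rw [norm_inv, norm_pow, h16n, one_pow, inv_one]
  -- tail
  have hsplit : (∑ k ∈ Finset.range p, (((2*k).choose k : ℕ) : ℚ_[p])^2 * ((16:ℚ_[p])^k)⁻¹)
      = (∑ k ∈ Finset.range (m+1), (((2*k).choose k : ℕ) : ℚ_[p])^2 * ((16:ℚ_[p])^k)⁻¹)
        + ∑ k ∈ Finset.Ico (m+1) p, (((2*k).choose k : ℕ) : ℚ_[p])^2 * ((16:ℚ_[p])^k)⁻¹ := by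
    rw [Finset.range_eq_Ico, ← Finset.sum_Ico_consecutive _ (by omega : 0 ≤ m+1) (by omega : m+1 ≤ p),
      ← Finset.range_eq_Ico]
  have htail : ‖∑ k ∈ Finset.Ico (m+1) p,
      (((2*k).choose k : ℕ) : ℚ_[p])^2 * ((16:ℚ_[p])^k)⁻¹‖ ≤ ((p:ℝ)⁻¹)^2 := by
    refine norm_sum_le_of _ _ hsq0 fun k hk => ?_
    rw [Finset.mem_Ico] at hk
    have hdvd : p ∣ (2*k).choose k := by
      have h1 := Nat.choose_mul_factorial_mul_factorial (show k ≤ 2*k by omega)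
      have h2 : 2*k - k = k := by omega
      rw [h2] at h1
      have h3 : p ∣ Nat.factorial (2*k) :=
        (Nat.Prime.dvd_factorial hp.out).2 (by omega)
      rw [← h1] at h3
      have hnk : ¬ p ∣ Nat.factorial k := fun hd => by
        have := (Nat.Prime.dvd_factorial hp.out).1 hd
        omega
      rcases (Nat.Prime.dvd_mul hp.out).1 h3 with h4 | h4
      · rcases (Nat.Prime.dvd_mul hp.out).1 h4 with h5 | h5
        · exact h5
        · exact absurd h5 hnk
      · exact absurd h4 hnk
    obtain ⟨t, ht⟩ := hdvd
    have hnorm : ‖(((2*k).choose k : ℕ) : ℚ_[p])‖ ≤ (p:ℝ)⁻¹ := by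
      rw [ht]
      push_cast
      rw [norm_mul, Padic.norm_p]
      have := norm_nat_le_one (p := p) t
      nlinarith [norm_nonneg ((t:ℚ_[p]))]
    rw [norm_mul, h16kn, mul_one, norm_pow]
    calc ‖(((2*k).choose k : ℕ) : ℚ_[p])‖^2 ≤ ((p:ℝ)⁻¹)^2 := by
          exact pow_le_pow_left₀ (norm_nonneg _) hnorm 2
      _ ≤ ((p:ℝ)⁻¹)^2 := le_refl _
  -- main terms
  have hmain : ∀ k ∈ Finset.range (m+1),
      ‖(((2*k).choose k : ℕ) : ℚ_[p])^2 * ((16:ℚ_[p])^k)⁻¹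
        - ((m.choose k : ℕ) : ℚ_[p])^2 *
          (1 - (p:ℚ_[p]) * ∑ j ∈ Finset.range k, (((m-j : ℕ) : ℚ_[p]))⁻¹)‖ ≤ ((p:ℝ)⁻¹)^2 := by
    intro k hk
    rw [Finset.mem_range] at hk
    have hk' : k ≤ m := by omega
    rw [term_eq hk' hpm, ← mul_sub, norm_mul]
    have hcle : ‖((m.choose k : ℕ) : ℚ_[p])^2‖ ≤ 1 := by
      rw [norm_pow]
      exact pow_le_one₀ (norm_nonneg _) (norm_nat_le_one _)
    have hinner : ‖(∏ j ∈ Finset.range k, (1 - (p:ℚ_[p]) * ((2*(m-j):ℕ):ℚ_[p])⁻¹)^2)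
        - (1 - (p:ℚ_[p]) * ∑ j ∈ Finset.range k, ((m-j:ℕ):ℚ_[p])⁻¹)‖ ≤ ((p:ℝ)⁻¹)^2 := by
      set w : ℕ → ℚ_[p] := fun j => ((2*(m-j):ℕ):ℚ_[p])⁻¹ with hw
      set t : ℕ → ℚ_[p] := fun j => 2 * w j - (p:ℚ_[p]) * (w j)^2 with htdef
      have hwdef : ∀ j, w j = ((2*(m-j):ℕ):ℚ_[p])⁻¹ := fun j => by rw [hw]
      have htdef' : ∀ j, t j = 2 * w j - (p:ℚ_[p]) * (w j)^2 := fun j => by rw [htdef]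
      clear_value w t
      have hwnorm : ∀ j ∈ Finset.range k, ‖w j‖ = 1 := by
        intro j hj
        rw [Finset.mem_range] at hj
        rw [hwdef j, norm_inv, norm_nat_eq_one, inv_one]
        intro hdvd
        have hle := Nat.le_of_dvd (by omega) hdvd
        omega
      have hsqf : ∀ j ∈ Finset.range k, (1 - (p:ℚ_[p]) * ((2*(m-j):ℕ):ℚ_[p])⁻¹)^2
          = 1 - (p:ℚ_[p]) * t j := by
        intro j _
        rw [htdef' j, hwdef j]
        ring
      rw [Finset.prod_congr rfl hsqf]
      have h2norm : ‖(2:ℚ_[p])‖ ≤ 1 := by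
        have hc : ((2:ℕ) : ℚ_[p]) = (2:ℚ_[p]) := by push_cast; rfl
        rw [← hc]
        exact norm_nat_le_one 2
      have htnorm : ∀ j ∈ Finset.range k, ‖t j‖ ≤ 1 := by
        intro j hj
        rw [htdef' j]
        refine le_trans (norm_sub_le_max _ _) (max_le ?_ ?_)
        · rw [norm_mul, hwnorm j hj, mul_one]
          exact h2norm
        · rw [norm_mul, norm_pow, hwnorm j hj, one_pow, mul_one, Padic.norm_p]
          exact le_trans hpinv1 (le_refl 1)
      have h1 := prod_approx (Finset.range k) t htnorm
      have hv : ∀ j ∈ Finset.range k, ((m-j:ℕ):ℚ_[p])⁻¹ = 2 * w j := by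
        intro j hj
        rw [hwdef j]
        rw [show ((2*(m-j):ℕ):ℚ_[p]) = 2 * ((m-j:ℕ):ℚ_[p]) by push_cast; ring, mul_inv,
          ← mul_assoc, mul_inv_cancel₀ (two_ne_zero), one_mul]
      have h2 : ‖(1 - (p:ℚ_[p]) * ∑ j ∈ Finset.range k, t j)
          - (1 - (p:ℚ_[p]) * ∑ j ∈ Finset.range k, ((m-j:ℕ):ℚ_[p])⁻¹)‖ ≤ ((p:ℝ)⁻¹)^2 := by
        have hdiff : (1 - (p:ℚ_[p]) * ∑ j ∈ Finset.range k, t j)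
            - (1 - (p:ℚ_[p]) * ∑ j ∈ Finset.range k, ((m-j:ℕ):ℚ_[p])⁻¹)
            = (p:ℚ_[p]) * ∑ j ∈ Finset.range k, (((m-j:ℕ):ℚ_[p])⁻¹ - t j) := by
          rw [Finset.sum_sub_distrib]
          ring
        rw [hdiff, norm_mul, Padic.norm_p]
        have hsum : ‖∑ j ∈ Finset.range k, (((m-j:ℕ):ℚ_[p])⁻¹ - t j)‖ ≤ (p:ℝ)⁻¹ := by
          refine norm_sum_le_of _ _ hp0 fun j hj => ?_
          have heq : ((m-j:ℕ):ℚ_[p])⁻¹ - t j = (p:ℚ_[p]) * (w j)^2 := by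
            rw [hv j hj, htdef' j]
            ring
          rw [heq, norm_mul, Padic.norm_p, norm_pow, hwnorm j hj, one_pow, mul_one]
        nlinarith [norm_nonneg (∑ j ∈ Finset.range k, (((m-j:ℕ):ℚ_[p])⁻¹ - t j))]
      exact approx_trans h1 h2
    calc ‖((m.choose k : ℕ) : ℚ_[p])^2‖ * ‖_‖ ≤ 1 * ((p:ℝ)⁻¹)^2 :=
          mul_le_mul hcle hinner (norm_nonneg _) zero_le_one
      _ = ((p:ℝ)⁻¹)^2 := one_mul _
  have hinv1 : ∀ n : ℕ, 0 < n → n < p → ‖((n : ℕ):ℚ_[p])⁻¹‖ ≤ 1 := by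
    intro n h1 h2
    rw [norm_inv, norm_nat_eq_one (fun hd => by have := Nat.le_of_dvd h1 hd; omega), inv_one]
  -- global objects
  set CC : ℚ_[p] := (((2*m).choose m : ℕ) : ℚ_[p]) with hCC
  set R1 : ℚ_[p] := ∑ j ∈ Finset.range m, (((m+1+j : ℕ) : ℚ_[p]))⁻¹ with hR1
  set H : ℚ_[p] := ∑ j ∈ Finset.range m, (((j+1 : ℕ) : ℚ_[p]))⁻¹ with hH
  set P : ℚ_[p] := ∏ j ∈ Finset.range m, (1 - (p:ℚ_[p]) * (((j+1 : ℕ) : ℚ_[p]))⁻¹) with hP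
  have hB : ‖(∑ k ∈ Finset.range (m+1), (((2*k).choose k : ℕ) : ℚ_[p])^2 * ((16:ℚ_[p])^k)⁻¹)
      - ∑ k ∈ Finset.range (m+1), ((m.choose k : ℕ) : ℚ_[p])^2 *
          (1 - (p:ℚ_[p]) * ∑ j ∈ Finset.range k, (((m-j : ℕ) : ℚ_[p]))⁻¹)‖ ≤ ((p:ℝ)⁻¹)^2 := by
    rw [← Finset.sum_sub_distrib]
    exact norm_sum_le_of _ _ hsq0 hmain
  have hG : (∑ k ∈ Finset.range (m+1), ((m.choose k : ℕ) : ℚ_[p])^2 *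
        (1 - (p:ℚ_[p]) * ∑ j ∈ Finset.range k, (((m-j : ℕ) : ℚ_[p]))⁻¹))
      = CC - (p:ℚ_[p]) * (CC * R1) := by
    have hg1 : (∑ k ∈ Finset.range (m+1), ((m.choose k : ℕ) : ℚ_[p])^2 *
          (1 - (p:ℚ_[p]) * ∑ j ∈ Finset.range k, (((m-j : ℕ) : ℚ_[p]))⁻¹))
        = (∑ k ∈ Finset.range (m+1), ((m.choose k : ℕ) : ℚ_[p])^2)
          - (p:ℚ_[p]) * ∑ k ∈ Finset.range (m+1), ((m.choose k : ℕ) : ℚ_[p])^2 *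
              (∑ j ∈ Finset.range k, (((m-j : ℕ) : ℚ_[p]))⁻¹) := by
      rw [Finset.mul_sum, ← Finset.sum_sub_distrib]
      exact Finset.sum_congr rfl fun k _ => by ring
    have hF0 : (∑ k ∈ Finset.range (m+1), ((m.choose k : ℕ) : ℚ_[p])^2) = CC := by
      have hc := congrArg (Nat.cast : ℕ → ℚ_[p]) (nat_sum_sq m)
      push_cast at hc
      rw [hCC, ← hc]
      exact Finset.sum_congr rfl fun k _ => by ring
    rw [hg1, hF0, F1 m, hCC, hR1]
  have hCeq : CC = (-1:ℚ_[p])^m * P := central_eq hpm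
  have hone : ‖(-1:ℚ_[p])^m‖ = 1 := by rw [norm_pow, norm_neg, norm_one, one_pow]
  have hPa : ‖P - (1 - (p:ℚ_[p]) * H)‖ ≤ ((p:ℝ)⁻¹)^2 := by
    rw [hP, hH]
    exact prod_approx _ _ fun j hj => hinv1 (j+1) (by omega) (by
      rw [Finset.mem_range] at hj; omega)
  have hPb : ‖P - 1‖ ≤ (p:ℝ)⁻¹ := by
    rw [hP]
    exact prod_approx_one _ _ fun j hj => hinv1 (j+1) (by omega) (by
      rw [Finset.mem_range] at hj; omega)
  have hHn : ‖H‖ ≤ 1 := by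
    rw [hH]
    exact norm_sum_le_of _ _ zero_le_one fun j hj => hinv1 (j+1) (by omega) (by
      rw [Finset.mem_range] at hj; omega)
  have hR1n : ‖R1‖ ≤ 1 := by
    rw [hR1]
    refine norm_sum_le_of _ _ zero_le_one fun j hj => ?_
    rw [Finset.mem_range] at hj
    exact hinv1 (m+1+j) (by omega) (by omega)
  have hHR : ‖R1 + H‖ ≤ (p:ℝ)⁻¹ := by
    rw [hR1, hH]
    exact harmonic_zero hpm
  have hCdist : ‖CC - (-1:ℚ_[p])^m‖ ≤ (p:ℝ)⁻¹ := by
    have heq : CC - (-1:ℚ_[p])^m = (-1:ℚ_[p])^m * (P - 1) := by rw [hCeq]; ring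
    rw [heq, norm_mul, hone, one_mul]
    exact hPb
  have hX : ‖(CC - (p:ℚ_[p]) * (CC * R1)) - (-1:ℚ_[p])^m‖ ≤ ((p:ℝ)⁻¹)^2 := by
    have hdec : (CC - (p:ℚ_[p]) * (CC * R1)) - (-1:ℚ_[p])^m
        = (-1:ℚ_[p])^m * (P - (1 - (p:ℚ_[p]) * H))
          - (p:ℚ_[p]) * ((CC - (-1:ℚ_[p])^m) * R1 + (-1:ℚ_[p])^m * (R1 + H)) := by
      rw [hCeq]
      ring
    rw [hdec]
    refine le_trans (norm_sub_le_max _ _) (max_le ?_ ?_)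
    · rw [norm_mul, hone, one_mul]
      exact hPa
    · rw [norm_mul, Padic.norm_p]
      have hbr : ‖(CC - (-1:ℚ_[p])^m) * R1 + (-1:ℚ_[p])^m * (R1 + H)‖ ≤ (p:ℝ)⁻¹ := by
        refine le_trans (Padic.nonarchimedean _ _) (max_le ?_ ?_)
        · rw [norm_mul]
          nlinarith [norm_nonneg (CC - (-1:ℚ_[p])^m), norm_nonneg R1]
        · rw [norm_mul, hone, one_mul]
          exact hHR
      nlinarith [norm_nonneg ((CC - (-1:ℚ_[p])^m) * R1 + (-1:ℚ_[p])^m * (R1 + H))]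
  -- final chain
  have e1 : ‖(∑ k ∈ Finset.range p, (((2*k).choose k : ℕ) : ℚ_[p])^2 * ((16:ℚ_[p])^k)⁻¹)
      - ∑ k ∈ Finset.range (m+1), (((2*k).choose k : ℕ) : ℚ_[p])^2 * ((16:ℚ_[p])^k)⁻¹‖
      ≤ ((p:ℝ)⁻¹)^2 := by
    rw [hsplit, add_sub_cancel_left]
    exact htail
  refine approx_trans e1 (approx_trans hB ?_)
  rw [hG]
  exact hX

end RVaux


/-- **Rodriguez-Villegas supercongruence (case n = 2 of Theorem 1.6).**
For an odd prime `p`, in the ring `ℤ_p` of `p`-adic integers,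
`∑_{k=0}^{p-1} C(2k,k)^2 · 16^{-k} ≡ (-1)^((p-1)/2) (mod p^2)`,
where `16^{-k}` is the inverse of `16^k` in `ℤ_p` (written via `Ring.inverse`). -/
theorem stmt1 (p : ℕ) [Fact p.Prime] (hp : Odd p) :
    (p : ℤ_[p]) ^ 2 ∣
      (∑ k ∈ Finset.range p,
        (((2 * k).choose k : ℕ) : ℤ_[p]) ^ 2 * Ring.inverse ((16 : ℤ_[p]) ^ k))
        - (-1 : ℤ_[p]) ^ ((p - 1) / 2) := by
  have hpodd : p % 2 = 1 := Nat.odd_iff.mp hp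
  have h2 := (Fact.out : p.Prime).two_le
  set m := (p-1)/2 with hm
  have hpm : p = 2*m+1 := by omega
  have hnd16 : ¬ p ∣ 16 := by
    intro hdvd
    have h16pow : (16 : ℕ) = 2^4 := by norm_num
    rw [h16pow] at hdvd
    have := (Fact.out : p.Prime).dvd_of_dvd_pow hdvd
    have := Nat.le_of_dvd (by omega) this
    omega
  have h16u : IsUnit (16 : ℤ_[p]) := by
    rw [PadicInt.isUnit_iff]
    have hc : ((16:ℤ_[p]) : ℚ_[p]) = ((16:ℕ) : ℚ_[p]) := by push_cast; rfl
    rw [PadicInt.norm_def, hc]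
    exact RVaux.norm_nat_eq_one hnd16
  set x : ℤ_[p] :=
    (∑ k ∈ Finset.range p,
        (((2 * k).choose k : ℕ) : ℤ_[p]) ^ 2 * Ring.inverse ((16 : ℤ_[p]) ^ k))
      - (-1 : ℤ_[p]) ^ ((p - 1) / 2) with hx
  suffices h : ‖x‖ ≤ (p:ℝ) ^ (-(2:ℕ) : ℤ) by
    have hmem := (PadicInt.norm_le_pow_iff_mem_span_pow x 2).1 h
    rwa [Ideal.mem_span_singleton] at hmem
  have hrh : ∀ z : ℤ_[p], PadicInt.Coe.ringHom z = (z : ℚ_[p]) := fun _ => rfl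
  have hinvlem : ∀ z : ℤ_[p], IsUnit z →
      ((Ring.inverse z : ℤ_[p]) : ℚ_[p]) = ((z : ℚ_[p]))⁻¹ := by
    intro z hu
    have hmul : z * Ring.inverse z = 1 := Ring.mul_inverse_cancel _ hu
    have hc := congrArg (PadicInt.Coe.ringHom (p := p)) hmul
    rw [map_mul, map_one, hrh, hrh] at hc
    exact eq_inv_of_mul_eq_one_right hc
  have hsumcoe : ((↑(∑ k ∈ Finset.range p,
        (((2 * k).choose k : ℕ) : ℤ_[p]) ^ 2 * Ring.inverse ((16 : ℤ_[p]) ^ k))) : ℚ_[p])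
      = ∑ k ∈ Finset.range p, (((2*k).choose k : ℕ) : ℚ_[p])^2 * ((16:ℚ_[p])^k)⁻¹ := by
    rw [← hrh, map_sum]
    refine Finset.sum_congr rfl fun k _ => ?_
    rw [map_mul, map_pow, hrh, hrh, hinvlem _ (h16u.pow k), PadicInt.coe_pow,
      show ((16:ℤ_[p]) : ℚ_[p]) = (16:ℚ_[p]) from rfl,
      show ((((2*k).choose k : ℕ) : ℤ_[p]) : ℚ_[p]) = (((2*k).choose k : ℕ) : ℚ_[p]) from
        PadicInt.coe_natCast _]
  have hcoe : ((x : ℤ_[p]) : ℚ_[p])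
      = (∑ k ∈ Finset.range p, (((2*k).choose k : ℕ) : ℚ_[p])^2 * ((16:ℚ_[p])^k)⁻¹)
        - (-1:ℚ_[p])^m := by
    rw [hx, ← hm, PadicInt.coe_sub, hsumcoe, PadicInt.coe_pow]
    norm_num
  rw [PadicInt.norm_def, hcoe]
  have hmain := RVaux.main (p := p) hpm
  have hz : ((p:ℝ))^(-(2:ℕ):ℤ) = ((p:ℝ)⁻¹)^2 := by
    rw [zpow_neg, inv_pow]
    norm_cast
  rw [hz]
  exact hmain
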